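/- Let G=(V,E) be a finite directed multigraph and let x,y : E → ℝ satisfy ρ_x(i) = ρ_y(i) for every node i ∈ V. Then for every arc a ∈ E with x_a > y_a, the arc of the difference multigraph D_{x,y} corresponding to a lies on a directed cycle of D_{x,y}. -/

import Mathlib

open Finset

/-- Net inflow `ρ_x(i)` of a vector `x : E → ℝ` at a node `i` of a finite directed
multigraph given by `tail, head : E → V`. -/
def netInflow {V E : Type*} [Fintype E] [DecidableEq V]
    (tail head : E → V) (x : E → ℝ) (i : V) : ℝ :=
  (∑ a ∈ Finset.univ.filter (fun a => head a = i), x a)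
    - (∑ a ∈ Finset.univ.filter (fun a => tail a = i), x a)

section Stmt0Aux

variable {V E : Type*} (tail head : E → V) (x y : E → ℝ)

/-- Tail of an arc of the difference multigraph. -/
noncomputable def stmt0DTail (e : E) : V := if y e < x e then tail e else head e

/-- Head of an arc of the difference multigraph. -/
noncomputable def stmt0DHead (e : E) : V := if y e < x e then head e else tail e

/-- One step along the difference multigraph. -/
def stmt0Step (u v : V) : Prop :=
  ∃ e : E, x e ≠ y e ∧ stmt0DTail tail head x y e = u ∧ stmt0DHead tail head x y e = v

theorem stmt0_reach [Fintype V] [Fintype E] [DecidableEq V]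
    (hρ : ∀ i : V, netInflow tail head x i = netInflow tail head y i)
    (a : E) (ha : y a < x a) :
    Relation.ReflTransGen (stmt0Step tail head x y) (head a) (tail a) := by
  classical
  by_contra hc
  set r := stmt0Step tail head x y with hr
  set S : Finset V := univ.filter (fun v => Relation.ReflTransGen r (head a) v) with hS
  have hmem : ∀ v, v ∈ S ↔ Relation.ReflTransGen r (head a) v := by
    intro v; simp [hS]
  have hclosed : ∀ u v, u ∈ S → r u v → v ∈ S := fun u v hu huv =>
    (hmem v).2 (((hmem u).1 hu).tail huv)
  have hha : head a ∈ S := (hmem _).2 Relation.ReflTransGen.refl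
  have hta : tail a ∉ S := fun h => hc ((hmem _).1 h)
  have hsum0 : ∑ e : E, ((if head e ∈ S then x e - y e else 0)
      - (if tail e ∈ S then x e - y e else 0)) = 0 := by
    have h1 : ∑ e : E, ((if head e ∈ S then x e - y e else 0)
        - (if tail e ∈ S then x e - y e else 0))
        = ∑ i ∈ S, (netInflow tail head x i - netInflow tail head y i) := by
      rw [Finset.sum_sub_distrib, ← Finset.sum_filter, ← Finset.sum_filter,
        ← Finset.sum_fiberwise_eq_sum_filter univ S head (fun e => x e - y e),
        ← Finset.sum_fiberwise_eq_sum_filter univ S tail (fun e => x e - y e),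
        ← Finset.sum_sub_distrib]
      refine Finset.sum_congr rfl fun i _ => ?_
      simp only [netInflow, Finset.sum_sub_distrib]
      ring
    rw [h1]
    apply Finset.sum_eq_zero
    intro i _
    rw [hρ i, sub_self]
  have hpos : 0 < ∑ e : E, ((if head e ∈ S then x e - y e else 0)
      - (if tail e ∈ S then x e - y e else 0)) := by
    apply Finset.sum_pos'
    · intro e _
      by_cases h1 : head e ∈ S <;> by_cases h2 : tail e ∈ S <;> simp [h1, h2]
      · -- head in, tail out : 0 ≤ x e - y e
        by_contra hlt
        push_neg at hlt
        have hxy : x e < y e := by linarith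
        have hstep : r (head e) (tail e) := by
          refine ⟨e, ne_of_lt hxy, ?_, ?_⟩
          · simp [stmt0DTail, not_lt.2 hxy.le]
          · simp [stmt0DHead, not_lt.2 hxy.le]
        exact h2 (hclosed _ _ h1 hstep)
      · -- head out, tail in : x e ≤ y e
        by_contra hlt
        push_neg at hlt
        have hxy : y e < x e := by linarith
        have hstep : r (tail e) (head e) := by
          refine ⟨e, (ne_of_lt hxy).symm, ?_, ?_⟩
          · simp [stmt0DTail, hxy]
          · simp [stmt0DHead, hxy]
        exact h1 (hclosed _ _ h2 hstep)
    · refine ⟨a, Finset.mem_univ a, ?_⟩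
      rw [if_pos hha, if_neg hta]
      linarith
  linarith

theorem stmt0_exists_nodup_chain {α : Type*} {r : α → α → Prop} {a b : α}
    (h : Relation.ReflTransGen r a b) :
    ∃ l : List α, List.Chain r a l ∧ (a :: l).getLast? = some b ∧ (a :: l).Nodup := by
  induction h using Relation.ReflTransGen.head_induction_on with
  | refl => exact ⟨[], List.Chain.nil, rfl, List.nodup_singleton b⟩
  | @head a c hac hcb ih =>
    obtain ⟨l, hchain, hlast, hnodup⟩ := ih
    by_cases hmem : a ∈ c :: l
    · obtain ⟨s, t, hst⟩ := List.append_of_mem hmem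
      have hsuf : (a :: t) <:+ (c :: l) := ⟨s, hst.symm⟩
      refine ⟨t, ?_, ?_, ?_⟩
      · have h1 : List.Chain' r (c :: l) := hchain
        exact h1.suffix hsuf
      · rw [hst] at hlast
        rwa [List.getLast?_append_cons] at hlast
      · exact hsuf.sublist.nodup hnodup
    · refine ⟨c :: l, List.Chain.cons hac hchain, ?_, ?_⟩
      · rwa [List.getLast?_cons_cons]
      · exact List.nodup_cons.2 ⟨hmem, hnodup⟩

end Stmt0Aux

/-- if `ρ_x = ρ_y`, then every arc `a` with `x_a > y_a` lies (as the
corresponding forward arc of the difference multigraph `D_{x,y}`) on a directed cycle of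
`D_{x,y}`.  Arcs of `D_{x,y}` are the arcs `e` with `x_e ≠ y_e`, oriented from `tail e` to
`head e` if `x_e > y_e` and reversed otherwise; a directed cycle is a cyclic sequence
`c 0, …, c k` of such arcs with pairwise distinct start vertices, each arc's endpoint
being the next arc's start vertex. -/
theorem stmt_0 {V E : Type*} [Fintype V] [Fintype E] [DecidableEq V]
    (tail head : E → V) (x y : E → ℝ)
    (hρ : ∀ i : V, netInflow tail head x i = netInflow tail head y i)
    (a : E) (ha : y a < x a) :
    ∃ k : ℕ, ∃ c : Fin (k + 1) → {e : E // x e ≠ y e},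
      Function.Injective
        (fun i => if y (c i).1 < x (c i).1 then tail (c i).1 else head (c i).1) ∧
      (∀ i : Fin (k + 1),
        (if y (c i).1 < x (c i).1 then head (c i).1 else tail (c i).1) =
          (if y (c (i + 1)).1 < x (c (i + 1)).1 then tail (c (i + 1)).1
            else head (c (i + 1)).1)) ∧
      (∃ i : Fin (k + 1), (c i).1 = a) := by
  classical
  obtain ⟨l, hchain, hlast, hnodup⟩ :=
    stmt0_exists_nodup_chain (stmt0_reach tail head x y hρ a ha)
  set L : List V := head a :: l with hL
  set k : ℕ := l.length with hk
  have hlen : L.length = k + 1 := by simp [hL, hk]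
  have hLne : L ≠ [] := by simp [hL]
  have hlastL : L.getLast hLne = tail a := by
    have h3 := List.getLast?_eq_getLast hLne
    rw [hlast] at h3
    exact (Option.some.inj h3).symm
  have hlastget : L.get ⟨k, by omega⟩ = tail a := by
    have h4 : L.get ⟨L.length - 1, by omega⟩ = L.getLast hLne := List.get_length_sub_one _
    rw [hlastL] at h4
    exact h4
  have hheadget : L.get ⟨0, by omega⟩ = head a := rfl
  -- the cyclic sequence of vertices
  set w : Fin (k + 1) → V := fun i => L.get (Fin.cast hlen.symm (i - 1)) with hw
  have hLinj : Function.Injective L.get := List.nodup_iff_injective_get.mp hnodup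
  have hwinj : Function.Injective w := by
    intro i j hij
    have h2 : Fin.cast hlen.symm (i - 1) = Fin.cast hlen.symm (j - 1) := hLinj hij
    have h3 : i - 1 = j - 1 := by
      apply Fin.ext
      have := congrArg Fin.val h2
      simpa using this
    have h4 := congrArg (· + 1) h3
    simpa [sub_add_cancel] using h4
  have hwsucc : ∀ i : Fin (k + 1), w (i + 1) = L.get (Fin.cast hlen.symm i) := by
    intro i
    simp only [hw, add_sub_cancel_right]
  have hchain' : ∀ (j : ℕ) (hj : j < L.length - 1),
      stmt0Step tail head x y (L.get ⟨j, by omega⟩) (L.get ⟨j + 1, by omega⟩) := by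
    have h1 : List.Chain' (stmt0Step tail head x y) L := hchain
    exact fun j hj => List.isChain_iff_getElem.mp h1 j (by omega)
  have hstep : ∀ i : Fin (k + 1), ∃ e : {e : E // x e ≠ y e},
      stmt0DTail tail head x y e.1 = w i ∧ stmt0DHead tail head x y e.1 = w (i + 1) ∧
      (i = 0 → e.1 = a) := by
    intro i
    by_cases h0 : i = 0
    · subst h0
      have hw0 : w (0 : Fin (k + 1)) = tail a := by
        have hv : ((0 - 1 : Fin (k + 1)) : ℕ) = k := by
          rw [Fin.coe_sub_one, if_pos rfl]
        have hcast : Fin.cast hlen.symm (0 - 1 : Fin (k + 1)) = ⟨k, by omega⟩ := by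
          apply Fin.ext; simpa using hv
        show L.get (Fin.cast hlen.symm ((0 : Fin (k + 1)) - 1)) = tail a
        rw [hcast]
        exact hlastget
      have hw1 : w ((0 : Fin (k + 1)) + 1) = head a := by
        rw [hwsucc]
        have hcast : Fin.cast hlen.symm (0 : Fin (k + 1)) = ⟨0, by omega⟩ := by
          apply Fin.ext; simp
        rw [hcast]
        exact hheadget
      refine ⟨⟨a, ha.ne'⟩, ?_, ?_, fun _ => rfl⟩
      · rw [hw0]
        simp [stmt0DTail, ha]
      · rw [hw1]
        simp [stmt0DHead, ha]
    · have hi1 : 1 ≤ (i : ℕ) := by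
        rcases Nat.eq_zero_or_pos (i : ℕ) with h | h
        · exact absurd (Fin.ext h) h0
        · exact h
      have hik : (i : ℕ) < k + 1 := i.isLt
      have hj : (i : ℕ) - 1 < L.length - 1 := by omega
      obtain ⟨e, he1, he2, he3⟩ := hchain' ((i : ℕ) - 1) hj
      refine ⟨⟨e, he1⟩, ?_, ?_, fun h => absurd h h0⟩
      · rw [he2]
        show _ = L.get (Fin.cast hlen.symm (i - 1))
        congr 1
        apply Fin.ext
        simp [Fin.coe_sub_one, h0]
      · rw [he3, hwsucc]
        congr 1
        apply Fin.ext
        simp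
        omega
  choose c hc1 hc2 hc3 using hstep
  refine ⟨k, c, ?_, ?_, ⟨0, hc3 0 rfl⟩⟩
  · have heq : (fun i => if y (c i).1 < x (c i).1 then tail (c i).1 else head (c i).1) = w :=
      funext fun i => hc1 i
    rw [heq]
    exact hwinj
  · intro i
    have h1 : (if y (c i).1 < x (c i).1 then head (c i).1 else tail (c i).1) = w (i + 1) :=
      hc2 i
    have h2 : (if y (c (i + 1)).1 < x (c (i + 1)).1 then tail (c (i + 1)).1
        else head (c (i + 1)).1) = w (i + 1) := hc1 (i + 1)
    rw [h1, h2]
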